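/- The error in the primal variable satisfies the energy-norm a posteriori bound ‖u - u_N‖_{X,a} ≤ ‖r¹‖_{X'}/√α_a + (√γ_a/β)·‖r²‖_{Y'}, where ‖v‖_{X,a} = √(a(v,v)) is the energy norm. -/

import Mathlib

open scoped RealInnerProductSpace

noncomputable def rieszMap (E : Type*) [NormedAddCommGroup E] [InnerProductSpace ℝ E]
    [FiniteDimensional ℝ E] : (E →ₗ[ℝ] ℝ) →ₗ[ℝ] E where
  toFun h := (InnerProductSpace.toDual ℝ E).symm (LinearMap.toContinuousLinearMap h)
  map_add' h₁ h₂ := by simp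
  map_smul' c h := by simp

lemma rieszMap_inner {E : Type*} [NormedAddCommGroup E] [InnerProductSpace ℝ E]
    [FiniteDimensional ℝ E] (h : E →ₗ[ℝ] ℝ) (v : E) : ⟪rieszMap E h, v⟫ = h v := by
  simp [rieszMap]

lemma sup_bound {E : Type*} [NormedAddCommGroup E] [InnerProductSpace ℝ E]
    [FiniteDimensional ℝ E] (h : E →ₗ[ℝ] ℝ) :
    (0 ≤ ⨆ v : {v : E // v ≠ 0}, h v.1 / ‖v.1‖) ∧
      ∀ v : E, h v ≤ (⨆ v : {v : E // v ≠ 0}, h v.1 / ‖v.1‖) * ‖v‖ := by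
  set S := ⨆ v : {v : E // v ≠ 0}, h v.1 / ‖v.1‖ with hS
  have hbdd : BddAbove (Set.range fun v : {v : E // v ≠ 0} => h v.1 / ‖v.1‖) := by
    refine ⟨‖LinearMap.toContinuousLinearMap h‖, ?_⟩
    rintro x ⟨⟨v, hv⟩, rfl⟩
    have hv' : 0 < ‖v‖ := norm_pos_iff.mpr hv
    rw [div_le_iff₀ hv']
    calc h v ≤ ‖(LinearMap.toContinuousLinearMap h) v‖ := le_abs_self _
    _ ≤ ‖LinearMap.toContinuousLinearMap h‖ * ‖v‖ := (LinearMap.toContinuousLinearMap h).le_opNorm v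
  have hle : ∀ v : E, v ≠ 0 → h v / ‖v‖ ≤ S := fun v hv => le_ciSup hbdd ⟨v, hv⟩
  have hSnn : 0 ≤ S := by
    by_cases hne : Nonempty {v : E // v ≠ 0}
    · obtain ⟨v, hv⟩ := hne
      have h1 := hle v hv
      have h2 := hle (-v) (by simpa using hv)
      have hv' : 0 < ‖v‖ := norm_pos_iff.mpr hv
      rw [map_neg, norm_neg] at h2
      rw [neg_div] at h2
      linarith
    · rw [hS, iSup, Set.range_eq_empty_iff.mpr (not_nonempty_iff.mp hne)]
      simp [Real.sSup_empty]
  refine ⟨hSnn, fun v => ?_⟩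
  by_cases hv : v = 0
  · simp [hv]
  · have hv' : 0 < ‖v‖ := norm_pos_iff.mpr hv
    have := hle v hv
    calc h v = h v / ‖v‖ * ‖v‖ := by field_simp
    _ ≤ S * ‖v‖ := by exact mul_le_mul_of_nonneg_right this hv'.le

lemma cs_bound {X : Type*} [NormedAddCommGroup X] [InnerProductSpace ℝ X]
    (a : X →ₗ[ℝ] X →ₗ[ℝ] ℝ) (ha_symm : ∀ w v : X, a w v = a v w)
    (αa : ℝ) (hαa : 0 < αa) (ha_coer : ∀ v : X, αa * ‖v‖ ^ 2 ≤ a v v)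
    (x y : X) : a x y ≤ Real.sqrt (a x x) * Real.sqrt (a y y) := by
  have hnn : ∀ v : X, (0:ℝ) ≤ a v v := fun v => le_trans (by positivity) (ha_coer v)
  have hsq : (a x y) ^ 2 ≤ a x x * a y y := by
    by_cases hx : a x x = 0
    · have hx0 : x = 0 := by
        have := ha_coer x; rw [hx] at this
        have : ‖x‖ ^ 2 ≤ 0 := by nlinarith
        have : ‖x‖ = 0 := by nlinarith [sq_nonneg ‖x‖, norm_nonneg x]
        simpa using this
      simp [hx0, hnn y, mul_nonneg (hnn x) (hnn y)]
    · have hxpos : 0 < a x x := lt_of_le_of_ne (hnn x) (Ne.symm hx)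
      have key := hnn (a x x • y - a x y • x)
      simp only [map_sub, map_smul, LinearMap.sub_apply, LinearMap.smul_apply,
        smul_eq_mul] at key
      rw [ha_symm y x] at key
      nlinarith [key]
  calc a x y ≤ |a x y| := le_abs_self _
  _ = Real.sqrt ((a x y) ^ 2) := (Real.sqrt_sq_eq_abs _).symm
  _ ≤ Real.sqrt (a x x * a y y) := Real.sqrt_le_sqrt hsq
  _ = Real.sqrt (a x x) * Real.sqrt (a y y) := Real.sqrt_mul (hnn x) _

set_option maxHeartbeats 2000000 in
theorem stmt11
  {X Y : Type*} [NormedAddCommGroup X] [InnerProductSpace ℝ X] [FiniteDimensional ℝ X]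
  [NormedAddCommGroup Y] [InnerProductSpace ℝ Y] [FiniteDimensional ℝ Y]
  (a : X →ₗ[ℝ] X →ₗ[ℝ] ℝ) (b : X →ₗ[ℝ] Y →ₗ[ℝ] ℝ)
  (ha_symm : ∀ w v : X, a w v = a v w)
  (αa γa : ℝ) (hαa : 0 < αa) (hγa : 0 < γa)
  (ha_coer : ∀ v : X, αa * ‖v‖ ^ 2 ≤ a v v)
  (ha_cont : ∀ w v : X, a w v ≤ γa * ‖w‖ * ‖v‖)
  (β : ℝ) (hβ : 0 < β)
  (hinfsup : ∀ q : Y, β * ‖q‖ ≤ ⨆ v : {v : X // v ≠ 0}, b v.1 q / ‖v.1‖)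
  (f : X →ₗ[ℝ] ℝ) (g : Y →ₗ[ℝ] ℝ)
  (u : X) (p : Y)
  (htruth1 : ∀ v : X, a u v + b v p = f v)
  (htruth2 : ∀ q : Y, b u q = g q)
  (XN : Submodule ℝ X) (YN : Submodule ℝ Y)
  (uN : X) (pN : Y) (huN : uN ∈ XN) (hpN : pN ∈ YN)
  (hrb1 : ∀ v ∈ XN, a uN v + b v pN = f v)
  (hrb2 : ∀ q ∈ YN, b uN q = g q)
:
    Real.sqrt (a (u - uN) (u - uN)) ≤ (⨆ v : {v : X // v ≠ 0}, (f v.1 - a uN v.1 - b v.1 pN) / ‖v.1‖) / Real.sqrt αa + (Real.sqrt γa / β) * (⨆ q : {q : Y // q ≠ 0}, (g q.1 - b uN q.1) / ‖q.1‖) := by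
  obtain ⟨r1, hr1app⟩ : ∃ h : X →ₗ[ℝ] ℝ, ∀ v : X, h v = f v - a uN v - b v pN :=
    ⟨f - a uN - b.flip pN, fun v => rfl⟩
  obtain ⟨r2, hr2app⟩ : ∃ h : Y →ₗ[ℝ] ℝ, ∀ q : Y, h q = g q - b uN q :=
    ⟨g - b uN, fun q => rfl⟩
  have hsup1 : (⨆ v : {v : X // v ≠ 0}, (f v.1 - a uN v.1 - b v.1 pN) / ‖v.1‖)
      = ⨆ v : {v : X // v ≠ 0}, r1 v.1 / ‖v.1‖ := by
    exact iSup_congr fun v => by rw [hr1app]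
  have hsup2 : (⨆ q : {q : Y // q ≠ 0}, (g q.1 - b uN q.1) / ‖q.1‖)
      = ⨆ q : {q : Y // q ≠ 0}, r2 q.1 / ‖q.1‖ := by
    exact iSup_congr fun q => by rw [hr2app]
  rw [hsup1, hsup2]
  obtain ⟨hR1nn, hR1⟩ := sup_bound r1
  obtain ⟨hR2nn, hR2⟩ := sup_bound r2
  obtain ⟨R1, hR1def⟩ : ∃ t : ℝ, t = ⨆ v : {v : X // v ≠ 0}, r1 v.1 / ‖v.1‖ := ⟨_, rfl⟩
  obtain ⟨R2, hR2def⟩ : ∃ t : ℝ, t = ⨆ q : {q : Y // q ≠ 0}, r2 q.1 / ‖q.1‖ := ⟨_, rfl⟩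
  rw [← hR1def] at hR1nn hR1 ⊢
  rw [← hR2def] at hR2nn hR2 ⊢
  clear hR1def hR2def hsup1 hsup2
  -- existence of a bounded right-inverse element w
  have hexw : ∃ w : X, (∀ q : Y, b w q = r2 q) ∧ β * ‖w‖ ≤ R2 := by
    set x : Y →ₗ[ℝ] X := (rieszMap X).comp b.flip with hxdef
    have hxq : ∀ (q : Y) (v : X), ⟪x q, v⟫ = b v q := fun q v => rieszMap_inner (b.flip q) v
    have hx : ∀ q : Y, β * ‖q‖ ≤ ‖x q‖ := by
      intro q
      refine le_trans (hinfsup q) ?_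
      by_cases hne : Nonempty {v : X // v ≠ 0}
      · refine ciSup_le fun ⟨v, hv⟩ => ?_
        have hv' : 0 < ‖v‖ := norm_pos_iff.mpr hv
        rw [div_le_iff₀ hv', ← hxq q v]
        exact real_inner_le_norm _ _
      · rw [iSup, Set.range_eq_empty_iff.mpr (not_nonempty_iff.mp hne)]
        simp [Real.sSup_empty]
    set G : Y →ₗ[ℝ] Y := (rieszMap Y).comp (b.comp x) with hGdef
    have hG : ∀ (s q : Y), ⟪G s, q⟫ = b (x s) q := fun s q => rieszMap_inner (b (x s)) q
    set r : Y := rieszMap Y r2 with hrdef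
    have hr : ∀ q : Y, ⟪r, q⟫ = r2 q := fun q => rieszMap_inner r2 q
    have hGinj : Function.Injective G := by
      rw [← LinearMap.ker_eq_bot, LinearMap.ker_eq_bot']
      intro s hs
      have h1 : ⟪x s, x s⟫ = 0 := by
        rw [hxq s (x s), ← hG s s, hs, inner_zero_left]
      have h2 : x s = 0 := inner_self_eq_zero.mp h1
      have h3 := hx s
      rw [h2, norm_zero] at h3
      have h4 : ‖s‖ ≤ 0 := nonpos_of_mul_nonpos_right (by linarith) hβ
      simpa [norm_le_zero_iff] using h4
    obtain ⟨s, hs⟩ := (LinearMap.injective_iff_surjective.mp hGinj) r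
    refine ⟨x s, fun q => by rw [← hG s q, hs, hr], ?_⟩
    have hrR2 : ‖r‖ ≤ R2 := by
      have h1 := hR2 r
      have h2 : r2 r = ‖r‖ ^ 2 := by rw [← hr r, real_inner_self_eq_norm_sq]
      rcases eq_or_lt_of_le (norm_nonneg r) with h | h
      · rw [← h]; exact hR2nn
      · have h3 : ‖r‖ * ‖r‖ ≤ R2 * ‖r‖ := by rw [← pow_two]; linarith
        exact le_of_mul_le_mul_right h3 h
    have h1 : ‖x s‖ ^ 2 = ⟪r, s⟫ := by
      rw [← real_inner_self_eq_norm_sq, ← hs, hG s s, hxq s (x s)]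
    have h2 : ⟪r, s⟫ ≤ ‖r‖ * ‖s‖ := real_inner_le_norm r s
    have h3 : β * ‖s‖ ≤ ‖x s‖ := hx s
    rcases eq_or_lt_of_le (norm_nonneg (x s)) with h | h
    · rw [← h, mul_zero]; exact hR2nn
    · have c1 : β * ‖x s‖ * ‖x s‖ ≤ R2 * ‖x s‖ := by
        calc β * ‖x s‖ * ‖x s‖ = β * ‖x s‖ ^ 2 := by ring
        _ ≤ β * (‖r‖ * ‖s‖) := by
            rw [h1]; exact mul_le_mul_of_nonneg_left h2 hβ.le
        _ = ‖r‖ * (β * ‖s‖) := by ring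
        _ ≤ ‖r‖ * ‖x s‖ := mul_le_mul_of_nonneg_left h3 (norm_nonneg r)
        _ ≤ R2 * ‖x s‖ := mul_le_mul_of_nonneg_right hrR2 (norm_nonneg _)
      exact le_of_mul_le_mul_right c1 h
  obtain ⟨w, hbw, hβw⟩ := hexw
  -- error decomposition
  obtain ⟨e, he⟩ : ∃ e' : X, e' = u - uN := ⟨_, rfl⟩
  obtain ⟨z, hz⟩ : ∃ z' : X, z' = e - w := ⟨_, rfl⟩
  rw [← he]
  have hezw : e = z + w := by rw [hz]; abel
  have hbz : ∀ q : Y, b z q = 0 := by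
    intro q
    have h1 : b z q = b e q - b w q := by rw [hz, map_sub]; rfl
    have h2 : b e q = b u q - b uN q := by rw [he, map_sub]; rfl
    rw [h1, h2, htruth2 q, hbw, hr2app]
    ring
  have haez : a e z = r1 z := by
    have h1 := htruth1 z
    have h2 : b z p = 0 := hbz p
    have h3 : b z pN = 0 := hbz pN
    have h4 : a e z = a u z - a uN z := by rw [he, map_sub]; rfl
    rw [hr1app, h4]
    linarith
  -- scalar quantities
  clear hinfsup hrb1 hrb2 htruth1 htruth2 hbw hbz
  have hnn : ∀ v : X, (0:ℝ) ≤ a v v := fun v => le_trans (by positivity) (ha_coer v)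
  obtain ⟨Z, hZdef⟩ : ∃ t : ℝ, t = Real.sqrt (a z z) := ⟨_, rfl⟩
  obtain ⟨E, hEdef⟩ : ∃ t : ℝ, t = Real.sqrt (a e e) := ⟨_, rfl⟩
  obtain ⟨Wa, hWadef⟩ : ∃ t : ℝ, t = Real.sqrt (a w w) := ⟨_, rfl⟩
  rw [← hEdef]
  have hZnn : 0 ≤ Z := hZdef ▸ Real.sqrt_nonneg _
  have hEnn : 0 ≤ E := hEdef ▸ Real.sqrt_nonneg _
  have hWann : 0 ≤ Wa := hWadef ▸ Real.sqrt_nonneg _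
  have hsα : 0 < Real.sqrt αa := Real.sqrt_pos.mpr hαa
  have hAnn : 0 ≤ R1 / Real.sqrt αa := div_nonneg hR1nn hsα.le
  have hZ2 : Z ^ 2 = a z z := by rw [hZdef]; exact Real.sq_sqrt (hnn z)
  have hE2 : E ^ 2 = a e e := by rw [hEdef]; exact Real.sq_sqrt (hnn e)
  have hWa2 : Wa ^ 2 = a w w := by rw [hWadef]; exact Real.sq_sqrt (hnn w)
  have hnormz : Real.sqrt αa * ‖z‖ ≤ Z := by
    have h1 : Real.sqrt (αa * ‖z‖ ^ 2) ≤ Z := hZdef ▸ Real.sqrt_le_sqrt (ha_coer z)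
    rwa [Real.sqrt_mul hαa.le, Real.sqrt_sq (norm_nonneg z)] at h1
  have hr1z : r1 z ≤ R1 / Real.sqrt αa * Z := by
    have h1 := hR1 z
    have h3 : R1 * ‖z‖ = R1 / Real.sqrt αa * (Real.sqrt αa * ‖z‖) := by
      field_simp
    have h2 : R1 * ‖z‖ ≤ R1 / Real.sqrt αa * Z := by
      rw [h3]; exact mul_le_mul_of_nonneg_left hnormz hAnn
    linarith
  have hawz : -(Wa * Z) ≤ a w z := by
    have h1 := cs_bound a ha_symm αa hαa ha_coer w (-z)
    simp only [map_neg, LinearMap.neg_apply, neg_neg] at h1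
    rw [← hWadef, ← hZdef] at h1
    linarith
  have hawz' : a w z ≤ Wa * Z := by
    have h1 := cs_bound a ha_symm αa hαa ha_coer w z
    rwa [← hWadef, ← hZdef] at h1
  have hazz : a z z ≤ R1 / Real.sqrt αa * Z + Wa * Z := by
    have h1 : a e z = a z z + a w z := by
      rw [hezw, map_add]; rfl
    have h2 : a z z = r1 z - a w z := by rw [← haez, h1]; ring
    linarith
  have hZle : Z ≤ R1 / Real.sqrt αa + Wa := by
    rcases eq_or_lt_of_le hZnn with h | h
    · linarith
    · nlinarith
  have haee : a e e ≤ R1 / Real.sqrt αa * Z + Wa * E := by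
    have h1 : a e e = a e z + a e w := by
      nth_rewrite 2 [hezw]
      rw [map_add]
    have h2 : a e w = a w e := ha_symm e w
    have h3 : a w e ≤ Wa * E := by
      have h4 := cs_bound a ha_symm αa hαa ha_coer w e
      rwa [← hWadef, ← hEdef] at h4
    linarith [haez, hr1z]
  have hEle : E ≤ R1 / Real.sqrt αa + Wa := by
    nlinarith [mul_le_mul_of_nonneg_left hZle hAnn]
  have hWale : Wa ≤ Real.sqrt γa * ‖w‖ := by
    have h1 : a w w ≤ γa * ‖w‖ ^ 2 := by have := ha_cont w w; nlinarith
    have h2 : Wa ≤ Real.sqrt (γa * ‖w‖ ^ 2) := hWadef ▸ Real.sqrt_le_sqrt h1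
    rwa [Real.sqrt_mul hγa.le, Real.sqrt_sq (norm_nonneg w)] at h2
  have hfinal : Real.sqrt γa * ‖w‖ ≤ Real.sqrt γa / β * R2 := by
    have hsγ : 0 ≤ Real.sqrt γa := Real.sqrt_nonneg _
    have h1 : Real.sqrt γa * (β * ‖w‖) ≤ Real.sqrt γa * R2 := mul_le_mul_of_nonneg_left hβw hsγ
    rw [div_mul_eq_mul_div, le_div_iff₀ hβ]
    nlinarith
  calc E ≤ R1 / Real.sqrt αa + Wa := hEle
  _ ≤ R1 / Real.sqrt αa + Real.sqrt γa * ‖w‖ := by linarith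
  _ ≤ R1 / Real.sqrt αa + Real.sqrt γa / β * R2 := by linarith
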